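/- arXiv:math/0210007 — 2 statements merged into one kernel-verified Lean document; each statement's English description precedes it below -/
import Mathlib

section
/- Let G_B be the presented group on generators t, π, β, α with the relations listed in the context (the presentation of the universal mapping class group of genus zero from Theorem 3.1), and let G_V be the presented group on generators π, β, α with the eleven relations listed in the context (Corollary 3.2). Then the quotient of G_B by the normal closure of the image of the generator t is isomorphic to G_V, via an isomorphism sending the classes of π, β, α in the quotient to the generators π, β, α of G_V. -/
/-!
The quotient of the presented group `G_B` (the presentation of the universal mapping class
group of genus zero, on generators `t, π, β, α`) by the normal closure of the image of `t`
is isomorphic to the presented group `G_V` (Thompson's group `V`, on generators `π, β, α`),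
via an isomorphism sending the classes of `π, β, α` to the generators `π, β, α`.
-/

namespace Stmt0

open scoped commutatorElement

/-! ### The presentation `G_B` (generators `0 = t`, `1 = π`, `2 = β`, `3 = α`) -/

/-- The generator `t` of `G_B`. -/
def t : FreeGroup (Fin 4) := FreeGroup.of 0

/-- The generator `π` of `G_B`. -/
def p : FreeGroup (Fin 4) := FreeGroup.of 1

/-- The generator `β` of `G_B`. -/
def b : FreeGroup (Fin 4) := FreeGroup.of 2

/-- The generator `α` of `G_B`. -/
def a : FreeGroup (Fin 4) := FreeGroup.of 3

/-- `t₁ := βtβ⁻¹`. -/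
def t1 : FreeGroup (Fin 4) := b * t * b⁻¹

/-- `t₂ := β⁻¹tβ`. -/
def t2 : FreeGroup (Fin 4) := b⁻¹ * t * b

/-- `t₃ := α²t₁α²`. -/
def t3 : FreeGroup (Fin 4) := a ^ 2 * t1 * a ^ 2

/-- `t₄ := α²t₂α²`. -/
def t4 : FreeGroup (Fin 4) := a ^ 2 * t2 * a ^ 2

/-- `π^β := β⁻¹πβ`. -/
def pb : FreeGroup (Fin 4) := b⁻¹ * p * b

/-- `π^{α²} := α²πα²`. -/
def pa : FreeGroup (Fin 4) := a ^ 2 * p * a ^ 2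

/-- The relators of `G_B` (Theorem 3.1). -/
def relsB : Set (FreeGroup (Fin 4)) :=
  { -- 1(a)
    ⁅t, t1⁆, ⁅t, t2⁆, ⁅t, p⁆,
    -- 1(b)
    t1 * p * (p * t2)⁻¹, t2 * p * (p * t1)⁻¹,
    -- 1(c)
    p ^ 2 * (t * t1⁻¹ * t2⁻¹)⁻¹,
    -- 1(d)
    b ^ 3,
    -- 1(e)
    b * (t * pb * p)⁻¹,
    -- 2(a)
    (b * a) ^ 5,
    -- 2(b)
    (a * p) ^ 3 * t2,
    -- 3(a)
    a ^ 4,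
    -- 4(a)
    ⁅p, a ^ 2 * p * a ^ 2⁆,
    -- 4(b)
    ⁅t3, p⁆, ⁅t4, p⁆,
    -- 4(c)
    a * t1 * a⁻¹ * t2⁻¹,
    -- 4(d)
    ⁅t1, t3⁆, ⁅t3, pb * t3 * pb⁻¹⁆, ⁅t3, pb * pa * pb⁻¹⁆,
    -- 4(e)
    ⁅pa, pb * pa * pb⁻¹⁆,
    -- 4(f)
    ⁅b * a * pb, pa⁆,
    -- 4(g)
    (b * a) * t2 * (b * a)⁻¹ * (pb * t3 * pb⁻¹)⁻¹,
    (b * a) * t3 * (b * a)⁻¹ * (pb * t4 * pb⁻¹)⁻¹,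
    (b * a) * t4 * (b * a)⁻¹ * t2⁻¹,
    -- 5(a)
    t * (a ^ 2 * t * a ^ 2)⁻¹,
    -- 6(a)
    (a ^ 2 * pb * a ^ 3 * b ^ 2) ^ 2 * ((pb * a ^ 3 * b ^ 2 * a ^ 2) ^ 2)⁻¹,
    -- 6(b)
    (a ^ 2 * b * a ^ 2 * p * pb * a ^ 3 * b ^ 2 * a ^ 2 * b ^ 2 * a ^ 2) *
      ((a ^ 3 * b ^ 2 * a ^ 2 * b * a ^ 2 * pb) ^ 2)⁻¹ }

/-- `G_B`. -/
abbrev GB := PresentedGroup relsB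

/-! ### The presentation `G_V` (generators `0 = π`, `1 = β`, `2 = α`) -/

/-- The generator `π` of `G_V`. -/
def pv : FreeGroup (Fin 3) := FreeGroup.of 0

/-- The generator `β` of `G_V`. -/
def bv : FreeGroup (Fin 3) := FreeGroup.of 1

/-- The generator `α` of `G_V`. -/
def av : FreeGroup (Fin 3) := FreeGroup.of 2

/-- `π^β := β⁻¹πβ`. -/
def pbv : FreeGroup (Fin 3) := bv⁻¹ * pv * bv

/-- `π^{α²} := α²πα²`. -/
def pav : FreeGroup (Fin 3) := av ^ 2 * pv * av ^ 2

/-- The eleven relators of `G_V` (Corollary 3.2). -/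
def relsV : Set (FreeGroup (Fin 3)) :=
  { pv ^ 2,
    bv ^ 3,
    av ^ 4,
    pbv * pv * bv⁻¹,
    (bv * av) ^ 5,
    (av * pv) ^ 3,
    ⁅pv, av ^ 2 * pv * av ^ 2⁆,
    ⁅bv * av * pbv, pav⁆,
    ⁅pav, pbv * pav * pbv⁆,
    (av ^ 2 * pbv * av ^ 3 * bv ^ 2) ^ 2 * ((pbv * av ^ 3 * bv ^ 2 * av ^ 2) ^ 2)⁻¹,
    (av ^ 2 * bv * av ^ 2 * bv ^ 2 * av ^ 3 * bv ^ 2 * av ^ 2 * bv ^ 2 * av ^ 2) *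
      ((av ^ 3 * bv ^ 2 * av ^ 2 * bv * av ^ 2 * pbv) ^ 2)⁻¹ }

/-- `G_V`. -/
abbrev GV := PresentedGroup relsV


/-! ### Auxiliary machinery for the proof -/

section Aux

open PresentedGroup

/-- Relators of `G_V` become trivial in `G_V`. -/
lemma relV {r : FreeGroup (Fin 3)} (h : r ∈ relsV) :
    PresentedGroup.mk relsV r = 1 :=
  (QuotientGroup.eq_one_iff _).mpr (Subgroup.subset_normalClosure h)

@[simp] lemma mkV_of (x : Fin 3) :
    PresentedGroup.mk relsV (FreeGroup.of x) = PresentedGroup.of x := rfl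

local notation "P" => (PresentedGroup.of 0 : GV)
local notation "B" => (PresentedGroup.of 1 : GV)
local notation "A" => (PresentedGroup.of 2 : GV)

lemma hP2 : P ^ 2 = 1 := by
  simpa [pv] using relV (show pv ^ 2 ∈ relsV by simp [relsV])

lemma hB3 : B ^ 3 = 1 := by
  simpa [bv] using relV (show bv ^ 3 ∈ relsV by simp [relsV])

lemma hA4 : A ^ 4 = 1 := by
  simpa [av] using relV (show av ^ 4 ∈ relsV by simp [relsV])

lemma hBA5 : (B * A) ^ 5 = 1 := by
  simpa [bv, av] using relV (show (bv * av) ^ 5 ∈ relsV by simp [relsV])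

lemma hAP3 : (A * P) ^ 3 = 1 := by
  simpa [av, pv] using relV (show (av * pv) ^ 3 ∈ relsV by simp [relsV])

lemma hPinv : P⁻¹ = P := by
  rw [inv_eq_iff_mul_eq_one, ← pow_two]; exact hP2

lemma hA2inv : (A ^ 2)⁻¹ = A ^ 2 := by
  rw [inv_eq_iff_mul_eq_one, ← pow_add]; exact hA4

lemma hA2A2 : A ^ 2 * (A ^ 2) = 1 := by rw [← pow_add]; exact hA4

lemma hA2A2' (x : GV) : A ^ 2 * (A ^ 2 * x) = x := by
  rw [← mul_assoc, hA2A2, one_mul]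

lemma hrel4 : B⁻¹ * P * B * P * B⁻¹ = 1 := by
  have := relV (show pbv * pv * bv⁻¹ ∈ relsV by simp [relsV])
  simpa [pbv, pv, bv, mul_assoc] using this

lemma hPBP : P * (B * P) = B * B := by
  have h := hrel4
  rw [mul_inv_eq_one] at h
  calc P * (B * P) = B * (B⁻¹ * P * B * P) := by group
    _ = B * B := by rw [h]

lemma hPBinvP : P * (B⁻¹ * P) = B⁻¹ * B⁻¹ := by
  have h : (P * (B * P))⁻¹ = (B * B)⁻¹ := by rw [hPBP]
  simp only [mul_inv_rev, hPinv] at h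
  calc P * (B⁻¹ * P) = P * B⁻¹ * P := by rw [mul_assoc]
    _ = B⁻¹ * B⁻¹ := h

lemma hBinv : B⁻¹ = B * B := by
  refine inv_eq_of_mul_eq_one_right ?_
  have : B * (B * B) = B ^ 3 := by rw [pow_succ, pow_two, mul_assoc]
  rw [this]; exact hB3

lemma hkey : P * (B⁻¹ * P * B) = B ^ 2 := by
  calc P * (B⁻¹ * P * B) = P * (B⁻¹ * P) * B := by group
    _ = B⁻¹ * B⁻¹ * B := by rw [hPBinvP]
    _ = B⁻¹ := by group
    _ = B * B := hBinv
    _ = B ^ 2 := (pow_two _).symm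

/-- The interpretation of the generators of `G_B` in `G_V` (killing `t`). -/
def fB : Fin 4 → GV
  | 0 => 1
  | 1 => .of 0
  | 2 => .of 1
  | 3 => .of 2

@[simp] lemma fB0 : fB 0 = 1 := rfl
@[simp] lemma fB1 : fB 1 = .of 0 := rfl
@[simp] lemma fB2 : fB 2 = .of 1 := rfl
@[simp] lemma fB3 : fB 3 = .of 2 := rfl

set_option maxHeartbeats 2000000 in
lemma fB_rels : ∀ r ∈ relsB, FreeGroup.lift fB r = 1 := by
  have h7 := relV (show ⁅pv, av ^ 2 * pv * av ^ 2⁆ ∈ relsV by simp [relsV])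
  have h8 := relV (show ⁅bv * av * pbv, pav⁆ ∈ relsV by simp [relsV])
  have h9 := relV (show ⁅pav, pbv * pav * pbv⁆ ∈ relsV by simp [relsV])
  have h10 := relV (show (av ^ 2 * pbv * av ^ 3 * bv ^ 2) ^ 2 *
      ((pbv * av ^ 3 * bv ^ 2 * av ^ 2) ^ 2)⁻¹ ∈ relsV by simp [relsV])
  have h11 := relV (show (av ^ 2 * bv * av ^ 2 * bv ^ 2 * av ^ 3 * bv ^ 2 * av ^ 2 * bv ^ 2 * av ^ 2) *
      ((av ^ 3 * bv ^ 2 * av ^ 2 * bv * av ^ 2 * pbv) ^ 2)⁻¹ ∈ relsV by simp [relsV])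
  simp only [pv, bv, av, pbv, pav, map_mul, map_inv, map_pow, mkV_of,
    commutatorElement_def] at h7 h8 h9 h10 h11
  intro r hr
  simp only [relsB, Set.mem_insert_iff, Set.mem_singleton_iff] at hr
  rcases hr with rfl|rfl|rfl|rfl|rfl|rfl|rfl|rfl|rfl|rfl|rfl|rfl|rfl|rfl|rfl|rfl|rfl|rfl|rfl|rfl|rfl|rfl|rfl|rfl|rfl|rfl
  all_goals
    simp only [t, p, b, a, t1, t2, t3, t4, pb, pa, map_mul, map_inv, map_pow,
      FreeGroup.lift_apply_of, fB0, fB1, fB2, fB3, commutatorElement_def,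
      one_mul, mul_one, inv_one, mul_inv_cancel, inv_mul_cancel,
      mul_inv_cancel_left, inv_mul_cancel_left, mul_inv_rev, inv_inv]
  all_goals try rfl
  -- 1c
  · exact hP2
  -- 1d
  · exact hB3
  -- 1e
  · calc B * (P⁻¹ * (B⁻¹ * (P⁻¹ * B)))
        = B * (P * (B⁻¹ * P) * B) := by rw [hPinv]; group
      _ = B * (B⁻¹ * B⁻¹ * B) := by rw [hPBinvP]
      _ = 1 := by group
  -- 2a
  · exact hBA5
  -- 2b
  · exact hAP3
  -- 3a
  · exact hA4
  -- 4a
  · simp only [mul_assoc, pow_succ, pow_zero, pow_one, one_mul, mul_inv_rev, inv_inv,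
      hPinv] at h7 ⊢
    exact h7
  -- 4b (two goals)
  · simp [hA2inv, hA2A2, hA2A2', mul_assoc]
  · simp [hA2inv, hA2A2, hA2A2', mul_assoc]
  -- 4d (first, trivial modulo A⁴)
  · simp [hA2inv, hA2A2, hA2A2', mul_assoc]
  -- 4d (2nd, 3rd)
  · simp [hA2inv, hA2A2, hA2A2', mul_assoc]
  · simp [hA2inv, hA2A2, hA2A2', mul_assoc]
  -- 4e
  · simp only [mul_assoc, pow_succ, pow_zero, pow_one, one_mul, mul_inv_rev, inv_inv,
      hPinv] at h9 ⊢
    exact h9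
  -- 4f
  · simp only [mul_assoc, pow_succ, pow_zero, pow_one, one_mul, mul_inv_rev, inv_inv,
      hPinv] at h8 ⊢
    exact h8
  -- 4g (three goals)
  · simp [hA2inv, hA2A2, hA2A2', mul_assoc]
  · simp [hA2inv, hA2A2, hA2A2', mul_assoc]
  · simp [hA2inv, hA2A2, hA2A2', mul_assoc]
  -- 5a
  · simp [hA2inv, hA2A2, hA2A2', mul_assoc]
  -- 6a
  · simp only [mul_assoc, pow_succ, pow_zero, pow_one, one_mul, mul_inv_rev, inv_inv,
      hPinv] at h10 ⊢
    exact h10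
  -- 6b
  · rw [mul_assoc ((PresentedGroup.of 2 : GV) ^ 2 * PresentedGroup.of 1 * PresentedGroup.of 2 ^ 2)
      (PresentedGroup.of 0) ((PresentedGroup.of 1)⁻¹ * PresentedGroup.of 0 * PresentedGroup.of 1),
      hkey]
    exact h11

end Aux



/-! ### The reverse direction: `G_V` relations hold in `G_B ⧸ ⟪t⟫` -/

/-- The quotient of `G_B` by the normal closure of `t`. -/
abbrev QB := GB ⧸ Subgroup.normalClosure {(PresentedGroup.of 0 : GB)}

/-- The canonical map from the free group on the generators of `G_B` to `QB`. -/
def mkQ : FreeGroup (Fin 4) →* QB :=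
  (QuotientGroup.mk' (Subgroup.normalClosure {(PresentedGroup.of 0 : GB)})).comp
    (PresentedGroup.mk relsB)

lemma relB {r : FreeGroup (Fin 4)} (h : r ∈ relsB) : mkQ r = 1 := by
  have h1 : PresentedGroup.mk relsB r = 1 :=
    (QuotientGroup.eq_one_iff _).mpr (Subgroup.subset_normalClosure h)
  simp [mkQ, h1]

lemma hT : mkQ (FreeGroup.of 0) = 1 := by
  have h0 : (PresentedGroup.of 0 : GB) ∈
      Subgroup.normalClosure {(PresentedGroup.of 0 : GB)} :=
    Subgroup.subset_normalClosure rfl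
  exact (QuotientGroup.eq_one_iff _).mpr h0

/-- The interpretation of the generators of `G_V` in `QB`. -/
def fV : Fin 3 → QB
  | 0 => mkQ (FreeGroup.of 1)
  | 1 => mkQ (FreeGroup.of 2)
  | 2 => mkQ (FreeGroup.of 3)

@[simp] lemma fV0 : fV 0 = mkQ (FreeGroup.of 1) := rfl
@[simp] lemma fV1 : fV 1 = mkQ (FreeGroup.of 2) := rfl
@[simp] lemma fV2 : fV 2 = mkQ (FreeGroup.of 3) := rfl

set_option maxHeartbeats 2000000 in
lemma fV_rels : ∀ r ∈ relsV, FreeGroup.lift fV r = 1 := by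
  have h1c := relB (show p ^ 2 * (t * t1⁻¹ * t2⁻¹)⁻¹ ∈ relsB by simp [relsB])
  have h1d := relB (show b ^ 3 ∈ relsB by simp [relsB])
  have h1e := relB (show b * (t * pb * p)⁻¹ ∈ relsB by simp [relsB])
  have h2a := relB (show (b * a) ^ 5 ∈ relsB by simp [relsB])
  have h2b := relB (show (a * p) ^ 3 * t2 ∈ relsB by simp [relsB])
  have h3a := relB (show a ^ 4 ∈ relsB by simp [relsB])
  have h4a := relB (show ⁅p, a ^ 2 * p * a ^ 2⁆ ∈ relsB by simp [relsB])
  have h4e := relB (show ⁅pa, pb * pa * pb⁻¹⁆ ∈ relsB by simp [relsB])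
  have h4f := relB (show ⁅b * a * pb, pa⁆ ∈ relsB by simp [relsB])
  have h6a := relB (show (a ^ 2 * pb * a ^ 3 * b ^ 2) ^ 2 *
      ((pb * a ^ 3 * b ^ 2 * a ^ 2) ^ 2)⁻¹ ∈ relsB by simp [relsB])
  have h6b := relB (show (a ^ 2 * b * a ^ 2 * p * pb * a ^ 3 * b ^ 2 * a ^ 2 * b ^ 2 * a ^ 2) *
      ((a ^ 3 * b ^ 2 * a ^ 2 * b * a ^ 2 * pb) ^ 2)⁻¹ ∈ relsB by simp [relsB])
  simp only [t, p, b, a, t1, t2, t3, t4, pb, pa, map_mul, map_inv, map_pow, hT,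
    commutatorElement_def, one_mul, mul_one, inv_one, mul_inv_cancel, inv_mul_cancel,
    mul_inv_cancel_left, inv_mul_cancel_left, mul_inv_rev, inv_inv]
    at h1c h1d h1e h2a h2b h3a h4a h4e h4f h6a h6b
  -- basic derived facts
  have hqPinv : (mkQ (FreeGroup.of 1))⁻¹ = mkQ (FreeGroup.of 1) := by
    refine inv_eq_of_mul_eq_one_right ?_
    rw [← pow_two]; exact h1c
  -- basic derived facts
  have hqBinv : (mkQ (FreeGroup.of 2))⁻¹ = mkQ (FreeGroup.of 2) ^ 2 := by
    refine inv_eq_of_mul_eq_one_right ?_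
    have h : mkQ (FreeGroup.of 2) * mkQ (FreeGroup.of 2) ^ 2 = mkQ (FreeGroup.of 2) ^ 3 :=
      (pow_succ' _ 2).symm
    rw [h]; exact h1d
  rw [hqPinv] at h1e
  -- h1e : B * (P * (B⁻¹ * (P * B))) = 1
  have e1 : mkQ (FreeGroup.of 1) * ((mkQ (FreeGroup.of 2))⁻¹ *
      (mkQ (FreeGroup.of 1) * mkQ (FreeGroup.of 2))) = (mkQ (FreeGroup.of 2))⁻¹ :=
    eq_inv_of_mul_eq_one_right h1e
  have e2 : mkQ (FreeGroup.of 1) * ((mkQ (FreeGroup.of 2))⁻¹ * mkQ (FreeGroup.of 1)) =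
      (mkQ (FreeGroup.of 2))⁻¹ * (mkQ (FreeGroup.of 2))⁻¹ := by
    calc mkQ (FreeGroup.of 1) * ((mkQ (FreeGroup.of 2))⁻¹ * mkQ (FreeGroup.of 1))
        = mkQ (FreeGroup.of 1) * ((mkQ (FreeGroup.of 2))⁻¹ *
            (mkQ (FreeGroup.of 1) * mkQ (FreeGroup.of 2))) * (mkQ (FreeGroup.of 2))⁻¹ := by
          group
      _ = (mkQ (FreeGroup.of 2))⁻¹ * (mkQ (FreeGroup.of 2))⁻¹ := by rw [e1]
  have hPBP : mkQ (FreeGroup.of 1) * mkQ (FreeGroup.of 2) * mkQ (FreeGroup.of 1) =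
      mkQ (FreeGroup.of 2) * mkQ (FreeGroup.of 2) := by
    have h2 : (mkQ (FreeGroup.of 1) * ((mkQ (FreeGroup.of 2))⁻¹ * mkQ (FreeGroup.of 1)))⁻¹ =
        ((mkQ (FreeGroup.of 2))⁻¹ * (mkQ (FreeGroup.of 2))⁻¹)⁻¹ := by rw [e2]
    simpa [mul_inv_rev, inv_inv, hqPinv, mul_assoc] using h2
  have hqkey : mkQ (FreeGroup.of 1) * ((mkQ (FreeGroup.of 2))⁻¹ * mkQ (FreeGroup.of 1) *
      mkQ (FreeGroup.of 2)) = mkQ (FreeGroup.of 2) ^ 2 := by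
    calc mkQ (FreeGroup.of 1) * ((mkQ (FreeGroup.of 2))⁻¹ * mkQ (FreeGroup.of 1) *
          mkQ (FreeGroup.of 2))
        = mkQ (FreeGroup.of 1) * ((mkQ (FreeGroup.of 2))⁻¹ * mkQ (FreeGroup.of 1)) *
            mkQ (FreeGroup.of 2) := by group
      _ = (mkQ (FreeGroup.of 2))⁻¹ * (mkQ (FreeGroup.of 2))⁻¹ * mkQ (FreeGroup.of 2) := by
          rw [e2]
      _ = (mkQ (FreeGroup.of 2))⁻¹ := by group
      _ = mkQ (FreeGroup.of 2) ^ 2 := hqBinv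
  intro r hr
  simp only [relsV, Set.mem_insert_iff, Set.mem_singleton_iff] at hr
  rcases hr with rfl|rfl|rfl|rfl|rfl|rfl|rfl|rfl|rfl|rfl|rfl
  all_goals
    simp only [pv, bv, av, pbv, pav, map_mul, map_inv, map_pow,
      FreeGroup.lift_apply_of, fV0, fV1, fV2, commutatorElement_def,
      one_mul, mul_one, inv_one, mul_inv_cancel, inv_mul_cancel,
      mul_inv_cancel_left, inv_mul_cancel_left, mul_inv_rev, inv_inv]
  -- (1) pv^2
  · exact h1c
  -- (2) bv^3
  · exact h1d
  -- (3) av^4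
  · exact h3a
  -- (4) pbv * pv * bv⁻¹
  · calc (mkQ (FreeGroup.of 2))⁻¹ * mkQ (FreeGroup.of 1) * mkQ (FreeGroup.of 2) *
        mkQ (FreeGroup.of 1) * (mkQ (FreeGroup.of 2))⁻¹
        = (mkQ (FreeGroup.of 2))⁻¹ * (mkQ (FreeGroup.of 1) * mkQ (FreeGroup.of 2) *
            mkQ (FreeGroup.of 1)) * (mkQ (FreeGroup.of 2))⁻¹ := by group
      _ = (mkQ (FreeGroup.of 2))⁻¹ * (mkQ (FreeGroup.of 2) * mkQ (FreeGroup.of 2)) *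
            (mkQ (FreeGroup.of 2))⁻¹ := by rw [hPBP]
      _ = 1 := by group
  -- (5) (bv * av)^5
  · exact h2a
  -- (6) (av * pv)^3
  · exact h2b
  -- (7)
  · exact h4a
  -- (8)
  · exact h4f
  -- (9)
  · simp only [mul_assoc, pow_succ, pow_zero, pow_one, one_mul, mul_inv_rev, inv_inv,
      hqPinv] at h4e ⊢
    exact h4e
  -- (10)
  · exact h6a
  -- (11)
  · rw [mul_assoc (mkQ (FreeGroup.of 3) ^ 2 * mkQ (FreeGroup.of 2) * mkQ (FreeGroup.of 3) ^ 2)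
      (mkQ (FreeGroup.of 1))
      ((mkQ (FreeGroup.of 2))⁻¹ * mkQ (FreeGroup.of 1) * mkQ (FreeGroup.of 2)), hqkey] at h6b
    exact h6b

/-! ### Assembling the isomorphism -/

/-- The homomorphism `G_B → G_V` killing `t`. -/
def phi0 : GB →* GV := PresentedGroup.toGroup fB_rels

lemma phi0_ker : Subgroup.normalClosure {(PresentedGroup.of 0 : GB)} ≤ phi0.ker := by
  apply Subgroup.normalClosure_le_normal
  intro x hx
  rw [Set.mem_singleton_iff] at hx
  subst hx
  show phi0 (PresentedGroup.of 0) = 1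
  simp [phi0]

/-- The induced homomorphism `QB → G_V`. -/
def phi : QB →* GV :=
  QuotientGroup.lift _ phi0 fun _ hx => phi0_ker hx

/-- The homomorphism `G_V → QB`. -/
def psi : GV →* QB := PresentedGroup.toGroup fV_rels

lemma hT' : (QuotientGroup.mk' (Subgroup.normalClosure {(PresentedGroup.of 0 : GB)}))
    (PresentedGroup.of 0) = 1 := hT

lemma psi_phi : psi.comp phi = MonoidHom.id QB := by
  ext x
  fin_cases x
  · show psi (phi ((QuotientGroup.mk' _) (PresentedGroup.of 0))) =
      (QuotientGroup.mk' _) (PresentedGroup.of 0)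
    rw [hT']
    show psi (phi0 (PresentedGroup.of 0)) = 1
    simp [phi0]
  · show psi (phi0 (PresentedGroup.of 1)) = (QuotientGroup.mk' _) (PresentedGroup.of 1)
    simp [phi0, psi]
    rfl
  · show psi (phi0 (PresentedGroup.of 2)) = (QuotientGroup.mk' _) (PresentedGroup.of 2)
    simp [phi0, psi]
    rfl
  · show psi (phi0 (PresentedGroup.of 3)) = (QuotientGroup.mk' _) (PresentedGroup.of 3)
    simp [phi0, psi]
    rfl

lemma phi_psi : phi.comp psi = MonoidHom.id GV := by
  ext x
  fin_cases x
  · show phi (psi (PresentedGroup.of 0)) = PresentedGroup.of 0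
    simp [psi]
    show phi0 (PresentedGroup.of 1) = _
    simp [phi0]
  · show phi (psi (PresentedGroup.of 1)) = PresentedGroup.of 1
    simp [psi]
    show phi0 (PresentedGroup.of 2) = _
    simp [phi0]
  · show phi (psi (PresentedGroup.of 2)) = PresentedGroup.of 2
    simp [psi]
    show phi0 (PresentedGroup.of 3) = _
    simp [phi0]


theorem quotient_GB_by_t_iso_GV :
    ∃ e : (GB ⧸ Subgroup.normalClosure {(PresentedGroup.of 0 : GB)}) ≃* GV,
      e ((QuotientGroup.mk' _) (PresentedGroup.of 1)) = (PresentedGroup.of 0 : GV) ∧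
      e ((QuotientGroup.mk' _) (PresentedGroup.of 2)) = (PresentedGroup.of 1 : GV) ∧
      e ((QuotientGroup.mk' _) (PresentedGroup.of 3)) = (PresentedGroup.of 2 : GV) := by
  refine ⟨MonoidHom.toMulEquiv phi psi psi_phi phi_psi, ?_, ?_, ?_⟩
  · show phi ((QuotientGroup.mk' _) (PresentedGroup.of 1)) = _
    show phi0 (PresentedGroup.of 1) = _
    simp [phi0]
  · show phi0 (PresentedGroup.of 2) = _
    simp [phi0]
  · show phi0 (PresentedGroup.of 3) = _
    simp [phi0]

end Stmt0
end

section
/- The presented group on generators α, t with relations α⁴ = 1, [t, αtα⁻¹] = 1 and [t, α²tα⁻²] = 1 is isomorphic to the semidirect product ℤ⁴ ⋊ ℤ/4ℤ, via an isomorphism sending t to the first standard basis vector of ℤ⁴ and α to the generator 1 of ℤ/4ℤ. (This is the two-generator form of the presentation of the cell stabilizer B_{σ⁻} in the universal mapping class group of genus zero.) -/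
/-!
The presented group on generators `α, t` with relations `α⁴ = 1`, `[t, αtα⁻¹] = 1` and
`[t, α²tα⁻²] = 1` is isomorphic to `ℤ⁴ ⋊ ℤ/4ℤ`, sending `t` to the first standard basis
vector of `ℤ⁴` and `α` to the generator `1` of `ℤ/4ℤ`.
-/

namespace Stmt8

/-- The additive automorphism of `ℤ⁴` (basis indexed by `ZMod 4`) cyclically shifting the
standard basis, sending `eᵢ` to `e_{i+1}`. -/
def shiftAdd : (ZMod 4 → ℤ) ≃+ (ZMod 4 → ℤ) where
  toFun f := fun j => f (j - 1)
  invFun f := fun j => f (j + 1)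
  left_inv f := funext fun j => by show f (j + 1 - 1) = f j; rw [add_sub_cancel_right]
  right_inv f := funext fun j => by show f (j - 1 + 1) = f j; rw [sub_add_cancel]
  map_add' f g := rfl

/-- The same automorphism, viewed multiplicatively. -/
def mshift : MulAut (Multiplicative (ZMod 4 → ℤ)) := AddEquiv.toMultiplicative shiftAdd

lemma mshift_pow_four : mshift ^ 4 = 1 := by
  have h : ∀ x, mshift (mshift (mshift (mshift x))) = x := by
    intro x
    show Multiplicative.ofAdd (fun j => Multiplicative.toAdd x (j - 1 - 1 - 1 - 1)) = x
    have : ∀ j : ZMod 4, j - 1 - 1 - 1 - 1 = j := by decide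
    simp only [this]
    rfl
  refine MulEquiv.ext fun x => ?_
  rw [pow_succ, pow_succ, pow_succ, pow_one]
  simpa using h x

/-- The action of `ℤ/4ℤ` on `ℤ⁴` in which the generator `1` cyclically shifts the basis,
sending `eᵢ` to `e_{i+1}`. -/
def act4 : Multiplicative (ZMod 4) →* MulAut (Multiplicative (ZMod 4 → ℤ)) :=
  AddMonoidHom.toMultiplicativeLeft
    (ZMod.lift 4 ⟨zmultiplesHom _ (Additive.ofMul mshift), by
      show (((4 : ℕ) : ℤ)) • Additive.ofMul mshift = 0
      have h : (((4:ℕ):ℤ)) • Additive.ofMul mshift = Additive.ofMul (mshift ^ (((4:ℕ):ℤ))) :=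
        (ofMul_zpow _ _).symm
      rw [h, zpow_natCast, mshift_pow_four]
      rfl⟩)

/-- The generator `α`. -/
def a : FreeGroup (Fin 2) := FreeGroup.of 0

/-- The generator `t`. -/
def t : FreeGroup (Fin 2) := FreeGroup.of 1

open scoped commutatorElement

/-- Relators: `α⁴ = 1`, `[t, αtα⁻¹] = 1`, `[t, α²tα⁻²] = 1`. -/
def rels : Set (FreeGroup (Fin 2)) :=
  {a ^ 4, ⁅t, a * t * a⁻¹⁆, ⁅t, a ^ 2 * t * (a ^ 2)⁻¹⁆}

open Multiplicative SemidirectProduct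

abbrev P := PresentedGroup rels
abbrev Nn := Multiplicative (ZMod 4 → ℤ)
abbrev Gg := Nn ⋊[act4] Multiplicative (ZMod 4)

-- act4 on integer casts
lemma act4_intCast (x : ℤ) : act4 (ofAdd ((x : ZMod 4))) = mshift ^ x := by
  simp only [act4, AddMonoidHom.coe_toMultiplicativeLeft, Function.comp_apply, toAdd_ofAdd,
    ZMod.lift_coe]
  show Additive.toMul (x • Additive.ofMul mshift) = mshift ^ x
  rfl

def A : P := PresentedGroup.of 0
def T : P := PresentedGroup.of 1

lemma rels_one : ∀ r ∈ rels, PresentedGroup.mk rels r = 1 := fun r hr =>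
  (QuotientGroup.eq_one_iff r).mpr (Subgroup.subset_normalClosure hr)

lemma relA : A ^ 4 = 1 := by
  have := rels_one (a ^ 4) (Or.inl rfl)
  rw [map_pow] at this
  exact this

lemma rel1 : Commute T (A * T * A⁻¹) := by
  have := rels_one ⁅t, a * t * a⁻¹⁆ (Or.inr (Or.inl rfl))
  rw [map_commutatorElement] at this
  exact commutatorElement_eq_one_iff_commute.mp this

lemma rel2 : Commute T (A ^ 2 * T * (A ^ 2)⁻¹) := by
  have := rels_one ⁅t, a ^ 2 * t * (a ^ 2)⁻¹⁆ (Or.inr (Or.inr rfl))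
  rw [map_commutatorElement] at this
  exact commutatorElement_eq_one_iff_commute.mp this


def homA : Multiplicative (ZMod 4) →* P :=
  AddMonoidHom.toMultiplicativeLeft
    (ZMod.lift 4 ⟨zmultiplesHom _ (Additive.ofMul A), by
      show (((4 : ℕ) : ℤ)) • Additive.ofMul A = 0
      have h : (((4:ℕ):ℤ)) • Additive.ofMul A = Additive.ofMul (A ^ (((4:ℕ):ℤ))) :=
        (ofMul_zpow _ _).symm
      rw [h, zpow_natCast, relA]
      rfl⟩)

lemma homA_intCast (x : ℤ) : homA (ofAdd ((x : ZMod 4))) = A ^ x := by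
  simp only [homA, AddMonoidHom.coe_toMultiplicativeLeft, Function.comp_apply, toAdd_ofAdd,
    ZMod.lift_coe]
  show Additive.toMul (x • Additive.ofMul A) = A ^ x
  rfl

lemma homA_one : homA (ofAdd 1) = A := by
  have := homA_intCast 1
  norm_num at this
  simpa using this

def Ti (i : ZMod 4) : P := homA (ofAdd i) * T * (homA (ofAdd i))⁻¹

lemma Ti_zero : Ti 0 = T := by
  simp [Ti, ofAdd_zero, map_one]

lemma conj_Ti (i k : ZMod 4) : homA (ofAdd i) * Ti k * (homA (ofAdd i))⁻¹ = Ti (i + k) := by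
  simp only [Ti, ofAdd_add, map_mul, mul_inv_rev]
  group


lemma Ti_one : Ti 1 = A * T * A⁻¹ := by simp [Ti, homA_one]

lemma Ti_two : Ti 2 = A ^ 2 * T * (A ^ 2)⁻¹ := by
  have h := homA_intCast 2
  rw [show (2:ℤ) = ((2:ℕ):ℤ) from rfl, zpow_natCast] at h
  norm_num at h
  rw [Ti, h]

lemma A_cube : A ^ (3 : ℤ) = A⁻¹ := by
  have : A ^ (3 : ℤ) = A ^ (4 : ℤ) * A⁻¹ := by group
  rw [this, show (4:ℤ) = ((4:ℕ):ℤ) by norm_num, zpow_natCast, relA, one_mul]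

lemma Ti_three : Ti 3 = A⁻¹ * T * A := by
  have h := homA_intCast 3
  norm_num at h
  rw [Ti, show homA (ofAdd 3) = A⁻¹ from h.trans A_cube, inv_inv]

lemma commT : ∀ j : ZMod 4, Commute T (Ti j) := by
  intro j
  have hj := (by decide : ∀ j : ZMod 4, j = 0 ∨ j = 1 ∨ j = 2 ∨ j = 3) j
  rcases hj with h | h | h | h <;> subst h
  · rw [Ti_zero]
  · rw [Ti_one]; exact rel1
  · rw [Ti_two]; exact rel2
  · rw [Ti_three]
    have h := congrArg (fun x : P => A⁻¹ * x * A) rel1.eq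
    simp only [mul_assoc, inv_mul_cancel_left] at h
    show T * (A⁻¹ * T * A) = A⁻¹ * T * A * T
    simp only [mul_assoc]
    rw [← h]
    simp [mul_assoc]

lemma commTi (i j : ZMod 4) : Commute (Ti i) (Ti j) := by
  have h := (commT (j - i)).map (MulAut.conj (homA (ofAdd i))).toMonoidHom
  simp only [MulEquiv.coe_toMonoidHom, MulAut.conj_apply] at h
  rw [conj_Ti, add_sub_cancel] at h
  exact h

lemma cz : ∀ (i j : ZMod 4) (m n : ℤ), Commute (Ti i ^ m) (Ti j ^ n) :=
  fun i j m n => (commTi i j).zpow_zpow m n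

def cNfun (f : ZMod 4 → ℤ) : P := Ti 0 ^ f 0 * Ti 1 ^ f 1 * Ti 2 ^ f 2 * Ti 3 ^ f 3

lemma cNfun_add (f g : ZMod 4 → ℤ) : cNfun (f + g) = cNfun f * cNfun g := by
  unfold cNfun
  simp only [Pi.add_apply, zpow_add]
  rw [(cz 0 1 (g 0) (f 1)).mul_mul_mul_comm]
  rw [((cz 0 2 (g 0) (f 2)).mul_left (cz 1 2 (g 1) (f 2))).mul_mul_mul_comm]
  rw [(((cz 0 3 (g 0) (f 3)).mul_left (cz 1 3 (g 1) (f 3))).mul_left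
      (cz 2 3 (g 2) (f 3))).mul_mul_mul_comm]

def cN : Nn →* P where
  toFun x := cNfun (toAdd x)
  map_one' := by simp [cNfun]
  map_mul' x y := cNfun_add _ _


lemma conjA_Ti (k : ZMod 4) : A * Ti k * A⁻¹ = Ti (1 + k) := by
  rw [← homA_one, conj_Ti]

lemma cN_apply (x : Nn) : cN x = cNfun (toAdd x) := rfl

lemma key1 (n : Nn) : cN (mshift n) = A * cN n * A⁻¹ := by
  have hc : A * cN n * A⁻¹ = MulAut.conj A (cN n) := by rw [MulAut.conj_apply]
  rw [hc, cN_apply, cN_apply]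
  show cNfun (fun j => toAdd n (j - 1)) = MulAut.conj A (cNfun (toAdd n))
  set f := toAdd n with hf
  unfold cNfun
  rw [map_mul, map_mul, map_mul, map_zpow, map_zpow, map_zpow, map_zpow]
  simp only [MulAut.conj_apply]
  rw [conjA_Ti, conjA_Ti, conjA_Ti, conjA_Ti]
  rw [show (0:ZMod 4) - 1 = 3 by decide, show (1:ZMod 4) - 1 = 0 by decide,
    show (2:ZMod 4) - 1 = 1 by decide, show (3:ZMod 4) - 1 = 2 by decide,
    show (1:ZMod 4) + 0 = 1 by decide, show (1:ZMod 4) + 1 = 2 by decide,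
    show (1:ZMod 4) + 2 = 3 by decide, show (1:ZMod 4) + 3 = 0 by decide]
  have hcm := ((((cz 1 0 (f 0) (f 3)).mul_left (cz 2 0 (f 1) (f 3))).mul_left
      (cz 3 0 (f 2) (f 3)))).eq
  rw [hcm]
  simp [mul_assoc]

lemma key_nat : ∀ (k : ℕ) (n : Nn), cN ((mshift ^ k) n) = A ^ k * cN n * (A ^ k)⁻¹ := by
  intro k
  induction k with
  | zero => intro n; simp
  | succ k ih =>
    intro n
    have h1 : (mshift ^ (k + 1)) n = (mshift ^ k) (mshift n) := by rw [pow_succ]; rfl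
    rw [h1, ih, key1, pow_succ]
    group

lemma compat : ∀ g : Multiplicative (ZMod 4),
    cN.comp (act4 g).toMonoidHom = (MulAut.conj (homA g)).toMonoidHom.comp cN := by
  intro g
  have hg : g = ofAdd ((((toAdd g).val : ℤ) : ZMod 4)) := by
    have h1 : (((toAdd g).val : ℕ) : ZMod 4) = toAdd g := ZMod.natCast_rightInverse _
    have h2 : ((((toAdd g).val : ℤ)) : ZMod 4) = (((toAdd g).val : ℕ) : ZMod 4) := by
      push_cast; ring_nf
    rw [h2, h1]
    rfl
  refine MonoidHom.ext fun n => ?_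
  simp only [MonoidHom.comp_apply, MulEquiv.coe_toMonoidHom, MulAut.conj_apply]
  rw [hg, act4_intCast, homA_intCast, zpow_natCast, zpow_natCast]
  exact key_nat _ n

def fgen : Fin 2 → Gg := ![inr (ofAdd 1), inl (ofAdd (Pi.single 0 1))]

lemma fwd_rels : ∀ r ∈ rels, FreeGroup.lift fgen r = 1 := by
  intro r hr
  have ha : FreeGroup.lift fgen a = inr (ofAdd 1) := by simp [a, fgen]
  have ht : FreeGroup.lift fgen t = inl (ofAdd (Pi.single 0 1)) := by simp [t, fgen]
  have hcomm : ∀ (n m : Nn) (g : Multiplicative (ZMod 4)),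
      ⁅(inl n : Gg), (inr g * inl m * (inr g)⁻¹ : Gg)⁆ = 1 := by
    intro n m g
    rw [← map_inv, ← inl_aut]
    apply commutatorElement_eq_one_iff_commute.mpr
    show inl n * inl (act4 g m) = inl (act4 g m) * inl n
    rw [← map_mul, mul_comm, map_mul]
  simp only [rels, Set.mem_insert_iff, Set.mem_singleton_iff] at hr
  rcases hr with rfl | rfl | rfl
  · rw [map_pow, ha, ← map_pow]
    rw [show (ofAdd (1 : ZMod 4)) ^ 4 = 1 by decide, map_one]
  · rw [map_commutatorElement, map_mul, map_mul, map_inv, ha, ht]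
    exact hcomm _ _ _
  · rw [map_commutatorElement, map_mul, map_mul, map_inv, map_pow, ha, ht]
    exact hcomm _ _ _

def fwd : P →* Gg := PresentedGroup.toGroup fwd_rels
def bwd : Gg →* P := SemidirectProduct.lift cN homA compat

lemma extZ4 {H : Type*} [Monoid H] (f g : Multiplicative (ZMod 4) →* H)
    (h : f (ofAdd 1) = g (ofAdd 1)) : f = g := by
  refine MonoidHom.ext fun x => ?_
  have hx : x = (ofAdd (1 : ZMod 4)) ^ (toAdd x).val := by
    rw [← ofAdd_nsmul, nsmul_eq_mul, mul_one]
    rw [ZMod.natCast_rightInverse _]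
    rfl
  rw [hx, map_pow, map_pow, h]

lemma single_smul (i : ZMod 4) (m : ℤ) :
    (Pi.single i m : ZMod 4 → ℤ) = m • (Pi.single i 1 : ZMod 4 → ℤ) := by
  funext j
  simp [Pi.single_apply, mul_ite]

lemma hdec (v : ZMod 4 → ℤ) :
    v = Pi.single 0 (v 0) + Pi.single 1 (v 1) + Pi.single 2 (v 2) + Pi.single 3 (v 3) := by
  funext j
  have hj := (by decide : ∀ j : ZMod 4, j = 0 ∨ j = 1 ∨ j = 2 ∨ j = 3) j
  rcases hj with rfl | rfl | rfl | rfl <;> simp +decide [Pi.single_apply]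

lemma extN {H : Type*} [Group H] (f g : Nn →* H)
    (h : ∀ i, f (ofAdd (Pi.single i 1)) = g (ofAdd (Pi.single i 1))) : f = g := by
  have key : ∀ (f : Nn →* H) (x : Nn), f x =
      f (ofAdd (Pi.single 0 1)) ^ (toAdd x 0) * f (ofAdd (Pi.single 1 1)) ^ (toAdd x 1) *
      f (ofAdd (Pi.single 2 1)) ^ (toAdd x 2) * f (ofAdd (Pi.single 3 1)) ^ (toAdd x 3) := by
    intro f x
    have hx : x = ofAdd (Pi.single 0 (toAdd x 0)) * ofAdd (Pi.single 1 (toAdd x 1)) *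
        ofAdd (Pi.single 2 (toAdd x 2)) * ofAdd (Pi.single 3 (toAdd x 3)) := by
      show x = ofAdd (Pi.single 0 (toAdd x 0) + Pi.single 1 (toAdd x 1) +
        Pi.single 2 (toAdd x 2) + Pi.single 3 (toAdd x 3))
      rw [← hdec]
      rfl
    conv_lhs => rw [hx]
    rw [map_mul, map_mul, map_mul]
    rw [single_smul 0, single_smul 1, single_smul 2, single_smul 3]
    rw [ofAdd_zsmul, ofAdd_zsmul, ofAdd_zsmul, ofAdd_zsmul]
    rw [map_zpow, map_zpow, map_zpow, map_zpow]
  refine MonoidHom.ext fun x => ?_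
  rw [key f, key g, h 0, h 1, h 2, h 3]

lemma cN_single (i : ZMod 4) : cN (ofAdd (Pi.single i 1)) = Ti i := by
  have hi := (by decide : ∀ i : ZMod 4, i = 0 ∨ i = 1 ∨ i = 2 ∨ i = 3) i
  rcases hi with rfl | rfl | rfl | rfl <;>
    simp +decide [cN_apply, cNfun, Pi.single_apply]

lemma fwd_of0 : fwd (PresentedGroup.of 0) = inr (ofAdd 1) := by
  show fwd (PresentedGroup.of 0) = fgen 0
  exact PresentedGroup.toGroup.of fwd_rels

lemma fwd_of1 : fwd (PresentedGroup.of 1) = inl (ofAdd (Pi.single 0 1)) := by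
  show fwd (PresentedGroup.of 1) = fgen 1
  exact PresentedGroup.toGroup.of fwd_rels

lemma fwd_homA (g : Multiplicative (ZMod 4)) : fwd (homA g) = inr g := by
  have h := extZ4 (fwd.comp homA) inr (by
    rw [MonoidHom.comp_apply, homA_one]
    exact fwd_of0)
  exact DFunLike.congr_fun h g

lemma mshift_single (j : ZMod 4) :
    mshift (ofAdd (Pi.single j 1)) = ofAdd ((Pi.single (j + 1) 1 : ZMod 4 → ℤ)) := by
  have h : (fun x => (Pi.single j 1 : ZMod 4 → ℤ) (x - 1)) =
      (Pi.single (j + 1) 1 : ZMod 4 → ℤ) := by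
    funext x
    simp [Pi.single_apply, sub_eq_iff_eq_add]
  show ofAdd (fun x => (Pi.single j 1 : ZMod 4 → ℤ) (x - 1)) =
    ofAdd ((Pi.single (j + 1) 1 : ZMod 4 → ℤ))
  rw [h]

lemma mshift_pow_single : ∀ (k : ℕ) (j : ZMod 4),
    (mshift ^ k) (ofAdd (Pi.single j 1)) = ofAdd ((Pi.single (j + k) 1 : ZMod 4 → ℤ)) := by
  intro k
  induction k with
  | zero => intro j; simp
  | succ k ih =>
    intro j
    have h1 : (mshift ^ (k + 1)) (ofAdd ((Pi.single j 1 : ZMod 4 → ℤ))) =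
        (mshift ^ k) (mshift (ofAdd (Pi.single j 1))) := by rw [pow_succ]; rfl
    rw [h1, mshift_single, ih]
    congr 2
    push_cast
    ring_nf

lemma act4_single (i : ZMod 4) :
    act4 (ofAdd i) (ofAdd (Pi.single 0 1)) = ofAdd ((Pi.single i 1 : ZMod 4 → ℤ)) := by
  have h1 : (((i.val : ℕ) : ZMod 4)) = i := ZMod.natCast_rightInverse _
  have h2 : ofAdd i = ofAdd ((((i.val : ℤ)) : ZMod 4)) := by
    rw [show ((((i.val : ℤ)) : ZMod 4)) = (((i.val : ℕ) : ZMod 4)) by push_cast; ring_nf, h1]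
  rw [h2, act4_intCast, zpow_natCast, mshift_pow_single, zero_add, h1]

lemma fwd_Ti (i : ZMod 4) : fwd (Ti i) = inl (ofAdd (Pi.single i 1)) := by
  have hT : fwd T = inl (ofAdd (Pi.single 0 1)) := fwd_of1
  rw [Ti, map_mul, map_mul, map_inv, fwd_homA, hT, ← map_inv, ← inl_aut, act4_single]

lemma bwd_fwd : bwd.comp fwd = MonoidHom.id P := by
  apply PresentedGroup.ext
  intro x
  have hx := (by decide : ∀ x : Fin 2, x = 0 ∨ x = 1) x
  rcases hx with rfl | rfl
  · show bwd (fwd (PresentedGroup.of 0)) = PresentedGroup.of 0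
    rw [fwd_of0]
    rw [show bwd (inr (ofAdd 1)) = homA (ofAdd 1) from SemidirectProduct.lift_inr _ _ _ _]
    exact homA_one
  · show bwd (fwd (PresentedGroup.of 1)) = PresentedGroup.of 1
    rw [fwd_of1]
    rw [show bwd (inl (ofAdd (Pi.single 0 1))) = cN (ofAdd (Pi.single 0 1)) from
      SemidirectProduct.lift_inl _ _ _ _]
    rw [cN_single, Ti_zero]
    rfl

lemma fwd_bwd : fwd.comp bwd = MonoidHom.id Gg := by
  apply SemidirectProduct.hom_ext
  · apply extN
    intro i
    simp only [MonoidHom.comp_apply]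
    rw [show bwd (inl (ofAdd (Pi.single i 1))) = cN (ofAdd (Pi.single i 1)) from
      SemidirectProduct.lift_inl _ _ _ _, cN_single, fwd_Ti]
    rfl
  · apply extZ4
    simp only [MonoidHom.comp_apply]
    rw [show bwd (inr (ofAdd 1)) = homA (ofAdd 1) from SemidirectProduct.lift_inr _ _ _ _,
      fwd_homA]
    rfl


theorem presented_iso_semidirect :
    ∃ e : PresentedGroup rels ≃*
        (Multiplicative (ZMod 4 → ℤ) ⋊[act4] Multiplicative (ZMod 4)),
      e (PresentedGroup.of 0) = SemidirectProduct.inr (Multiplicative.ofAdd 1) ∧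
      e (PresentedGroup.of 1) =
        SemidirectProduct.inl (Multiplicative.ofAdd (Pi.single (0 : ZMod 4) 1)) := by
  refine ⟨MonoidHom.toMulEquiv fwd bwd bwd_fwd fwd_bwd, ?_, ?_⟩
  · exact fwd_of0
  · exact fwd_of1


end Stmt8
end
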